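/- If the vertical scaling function S is not identically zero on any subrectangle of D, then the upper vertical scaling matrix M̄_n is primitive for every n ∈ ℤ⁺. If moreover S is everywhere positive or everywhere negative on D, then M̲_n is primitive for every n ∈ ℤ⁺. -/
import Mathlib


open scoped BigOperators

noncomputable def oscil (φ : ℝ × ℝ → ℝ) (E : Set (ℝ × ℝ)) : ℝ :=
  sSup ((fun p : (ℝ × ℝ) × (ℝ × ℝ) => φ p.1 - φ p.2) '' (E ×ˢ E))

noncomputable def eudist (s t : ℝ × ℝ) : ℝ :=
  Real.sqrt ((s.1 - t.1) ^ 2 + (s.2 - t.2) ^ 2)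

noncomputable def uMap (x0 len : ℝ) (N : ℕ) (i : Fin N) (x : ℝ) : ℝ :=
  if i.val % 2 = 0 then x0 + i.val * (len / N) + (x - x0) / N
  else x0 + (i.val + 1) * (len / N) - (x - x0) / N

noncomputable def uInv (x0 len : ℝ) (N : ℕ) (i : Fin N) (y : ℝ) : ℝ :=
  if i.val % 2 = 0 then x0 + N * (y - (x0 + i.val * (len / N)))
  else x0 + N * ((x0 + (i.val + 1) * (len / N)) - y)

noncomputable def Lmap (x0 y0 len : ℝ) (N : ℕ) (w : Fin N × Fin N) (t : ℝ × ℝ) : ℝ × ℝ :=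
  (uMap x0 len N w.1 t.1, uMap y0 len N w.2 t.2)

noncomputable def LInv (x0 y0 len : ℝ) (N : ℕ) (w : Fin N × Fin N) (t : ℝ × ℝ) : ℝ × ℝ :=
  (uInv x0 len N w.1 t.1, uInv y0 len N w.2 t.2)

noncomputable def sqD (x0 y0 len : ℝ) : Set (ℝ × ℝ) :=
  Set.Icc x0 (x0 + len) ×ˢ Set.Icc y0 (y0 + len)

noncomputable def cell (x0 y0 len : ℝ) (N : ℕ) : List (Fin N × Fin N) → Set (ℝ × ℝ)
  | [] => sqD x0 y0 len
  | w :: ws => Lmap x0 y0 len N w '' cell x0 y0 len N ws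

noncomputable def oscSum (x0 y0 len : ℝ) (N : ℕ) (φ : ℝ × ℝ → ℝ)
    (p : List (Fin N × Fin N)) (k : ℕ) : ℝ :=
  ∑ w : Fin k → Fin N × Fin N, oscil φ (cell x0 y0 len N (p ++ List.ofFn w))

noncomputable def supAbs (S : ℝ × ℝ → ℝ) (E : Set (ℝ × ℝ)) : ℝ :=
  sSup ((fun t => |S t|) '' E)

noncomputable def infAbs (S : ℝ × ℝ → ℝ) (E : Set (ℝ × ℝ)) : ℝ :=
  sInf ((fun t => |S t|) '' E)

open Classical in
noncomputable def upMat (x0 y0 len : ℝ) (N : ℕ) (S : ℝ × ℝ → ℝ) (m : ℕ) :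
    Matrix (Fin (m + 1) → Fin N × Fin N) (Fin (m + 1) → Fin N × Fin N) ℝ :=
  fun i j =>
    if ∀ k : Fin m, i k.succ = j k.castSucc then
      supAbs S (cell x0 y0 len N (List.ofFn i ++ [j (Fin.last m)]))
    else 0

open Classical in
noncomputable def lowMat (x0 y0 len : ℝ) (N : ℕ) (S : ℝ × ℝ → ℝ) (m : ℕ) :
    Matrix (Fin (m + 1) → Fin N × Fin N) (Fin (m + 1) → Fin N × Fin N) ℝ :=
  fun i j =>
    if ∀ k : Fin m, i k.succ = j k.castSucc then
      infAbs S (cell x0 y0 len N (List.ofFn i ++ [j (Fin.last m)]))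
    else 0

def MatPrimitive {α : Type*} [Fintype α] [DecidableEq α] (A : Matrix α α ℝ) : Prop :=
  ∃ k : ℕ, 0 < k ∧ ∀ i j, 0 < (A ^ k) i j


section AuxScaling

lemma uMap_image' (x0 len : ℝ) (N : ℕ) (hN : 0 < N) (i : Fin N) (a s : ℝ)
    (ha : x0 ≤ a) (hb : a + s ≤ x0 + len) (hlen : 0 ≤ len) :
    ∃ a', x0 ≤ a' ∧ a' + s / N ≤ x0 + len ∧
      uMap x0 len N i '' Set.Icc a (a + s) = Set.Icc a' (a' + s / N) := by
  have hNR : (0:ℝ) < N := by exact_mod_cast hN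
  have hiN : (i.val : ℝ) + 1 ≤ N := by exact_mod_cast i.isLt
  have hi0 : (0:ℝ) ≤ (i.val : ℝ) := Nat.cast_nonneg _
  have h1 : (0:ℝ) ≤ len / N := div_nonneg hlen hNR.le
  have hNlen : (N:ℝ) * (len / N) = len := by field_simp
  by_cases hpar : i.val % 2 = 0
  · refine ⟨x0 + i.val * (len/N) + (a - x0)/N, ?_, ?_, ?_⟩
    · have : (0:ℝ) ≤ (i.val:ℝ) * (len/N) + (a - x0)/N :=
        add_nonneg (mul_nonneg hi0 h1) (div_nonneg (by linarith) hNR.le)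
      linarith
    · have e1 : (a - x0)/N + s/N = (a + s - x0)/N := by ring
      have h3 : (a + s - x0)/N ≤ len/N := by gcongr; linarith
      have h4 : (i.val:ℝ) * (len/N) ≤ ((N:ℝ)-1) * (len/N) :=
        mul_le_mul_of_nonneg_right (by linarith) h1
      have h5 : ((N:ℝ)-1)*(len/N) + len/N = len := by
        have : ((N:ℝ)-1)*(len/N) + len/N = (N:ℝ) * (len/N) := by ring
        rw [this, hNlen]
      linarith
    · have hf : uMap x0 len N i = fun x => (1/(N:ℝ)) * x + (x0 + i.val * (len/N) - x0/N) := by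
        funext x; simp only [uMap, if_pos hpar]; field_simp; ring
      rw [hf, Set.image_affine_Icc' (by positivity : (0:ℝ) < 1/(N:ℝ))]
      congr 1 <;> field_simp <;> ring
  · refine ⟨x0 + ((i.val:ℝ)+1) * (len/N) - (a + s - x0)/N, ?_, ?_, ?_⟩
    · have h6 : len/N ≤ ((i.val:ℝ)+1)*(len/N) := le_mul_of_one_le_left h1 (by linarith)
      have h3 : (a + s - x0)/N ≤ len/N := by gcongr; linarith
      linarith
    · have h7 : ((i.val:ℝ)+1)*(len/N) ≤ (N:ℝ)*(len/N) := mul_le_mul_of_nonneg_right hiN h1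
      have e1 : (a + s - x0)/N = (a - x0)/N + s/N := by ring
      have h8 : (0:ℝ) ≤ (a - x0)/N := div_nonneg (by linarith) hNR.le
      linarith [hNlen]
    · have hf : uMap x0 len N i = fun x =>
          (x0 + ((i.val:ℝ)+1) * (len/N) + x0/N) - (1/(N:ℝ)) * x := by
        funext x; simp only [uMap, if_neg hpar]; push_cast; field_simp; ring
      have him : (fun x => (x0 + ((i.val:ℝ)+1) * (len/N) + x0/N) - (1/(N:ℝ)) * x) '' Set.Icc a (a+s)
          = (fun y => (x0 + ((i.val:ℝ)+1) * (len/N) + x0/N) - y) ''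
            ((fun x => (1/(N:ℝ)) * x) '' Set.Icc a (a+s)) := by
        rw [Set.image_image]
      rw [hf, him, Set.image_mul_left_Icc' (by positivity : (0:ℝ) < 1/(N:ℝ)),
        Set.image_const_sub_Icc]
      congr 1 <;> field_simp <;> ring

lemma cell_struct (x0 y0 len : ℝ) (hlen : 0 < len) (N : ℕ) (hN : 0 < N)
    (w : List (Fin N × Fin N)) :
    ∃ a c s, 0 < s ∧ x0 ≤ a ∧ a + s ≤ x0 + len ∧ y0 ≤ c ∧ c + s ≤ y0 + len ∧
      cell x0 y0 len N w = Set.Icc a (a + s) ×ˢ Set.Icc c (c + s) := by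
  have hNR : (0:ℝ) < N := by exact_mod_cast hN
  induction w with
  | nil => exact ⟨x0, y0, len, hlen, le_refl _, le_refl _, le_refl _, le_refl _, rfl⟩
  | cons p w ih =>
    obtain ⟨a, c, s, hs, ha, hb, hc, hd, hE⟩ := ih
    obtain ⟨a', ha', hb', hIa⟩ := uMap_image' x0 len N hN p.1 a s ha hb hlen.le
    obtain ⟨c', hc', hd', hIc⟩ := uMap_image' y0 len N hN p.2 c s hc hd hlen.le
    refine ⟨a', c', s / N, by positivity, ha', hb', hc', hd', ?_⟩
    show Lmap x0 y0 len N p '' cell x0 y0 len N w = _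
    rw [hE, ← hIa, ← hIc, Set.prod_image_image_eq]
    rfl

lemma supAbs_pos_aux (x0 y0 len : ℝ) (S : ℝ × ℝ → ℝ)
    (hS1 : ∀ t ∈ sqD x0 y0 len, |S t| < 1)
    (hNZ : ∀ a b c d : ℝ, x0 ≤ a → a < b → b ≤ x0 + len → y0 ≤ c → c < d → d ≤ y0 + len →
      ∃ t ∈ Set.Icc a b ×ˢ Set.Icc c d, S t ≠ 0)
    (E : Set (ℝ × ℝ)) (a c s : ℝ) (hs : 0 < s) (ha : x0 ≤ a) (hb : a + s ≤ x0 + len)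
    (hc : y0 ≤ c) (hd : c + s ≤ y0 + len)
    (hE : E = Set.Icc a (a + s) ×ˢ Set.Icc c (c + s)) : 0 < supAbs S E := by
  have hsub : E ⊆ sqD x0 y0 len := by
    rw [hE]
    exact Set.prod_mono (Set.Icc_subset_Icc (by linarith) (by linarith))
      (Set.Icc_subset_Icc (by linarith) (by linarith))
  obtain ⟨t, ht, htne⟩ := hNZ a (a + s) c (c + s) ha (by linarith) hb hc (by linarith) hd
  have hbdd : BddAbove ((fun t => |S t|) '' E) := by
    refine ⟨1, ?_⟩
    rintro _ ⟨u, hu, rfl⟩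
    exact (hS1 u (hsub hu)).le
  have htE : t ∈ E := by rw [hE]; exact ht
  exact lt_of_lt_of_le (abs_pos.mpr htne) (le_csSup hbdd ⟨t, htE, rfl⟩)

lemma infAbs_pos_aux (x0 y0 len : ℝ) (S : ℝ × ℝ → ℝ)
    (hS : ContinuousOn S (sqD x0 y0 len))
    (hsign : ∀ t ∈ sqD x0 y0 len, S t ≠ 0)
    (E : Set (ℝ × ℝ)) (a c s : ℝ) (hs : 0 < s) (ha : x0 ≤ a) (hb : a + s ≤ x0 + len)
    (hc : y0 ≤ c) (hd : c + s ≤ y0 + len)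
    (hE : E = Set.Icc a (a + s) ×ˢ Set.Icc c (c + s)) : 0 < infAbs S E := by
  have hsub : E ⊆ sqD x0 y0 len := by
    rw [hE]
    exact Set.prod_mono (Set.Icc_subset_Icc (by linarith) (by linarith))
      (Set.Icc_subset_Icc (by linarith) (by linarith))
  have hcomp : IsCompact E := by rw [hE]; exact isCompact_Icc.prod isCompact_Icc
  have hne : E.Nonempty := by
    refine ⟨(a, c), ?_⟩
    rw [hE]
    exact ⟨Set.left_mem_Icc.mpr (by linarith), Set.left_mem_Icc.mpr (by linarith)⟩
  have hcont : ContinuousOn (fun t => |S t|) E := (hS.mono hsub).abs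
  have hmem : sInf ((fun t => |S t|) '' E) ∈ (fun t => |S t|) '' E :=
    (hcomp.image_of_continuousOn hcont).sInf_mem (hne.image _)
  obtain ⟨u, hu, heq⟩ := hmem
  rw [infAbs, ← heq]
  exact abs_pos.mpr (hsign u (hsub hu))

lemma myPow_entry_nonneg {n : Type*} [Fintype n] [DecidableEq n] (A : Matrix n n ℝ)
    (hA : ∀ i j, 0 ≤ A i j) (k : ℕ) : ∀ i j, 0 ≤ (A ^ k) i j := by
  induction k with
  | zero =>
    intro i j
    rw [pow_zero, Matrix.one_apply]
    split <;> norm_num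
  | succ k ih =>
    intro i j
    rw [pow_succ, Matrix.mul_apply]
    exact Finset.sum_nonneg fun l _ => mul_nonneg (ih i l) (hA l j)

lemma myPow_entry_pos_of_chain {n : Type*} [Fintype n] [DecidableEq n] (A : Matrix n n ℝ)
    (hA : ∀ i j, 0 ≤ A i j) :
    ∀ (k : ℕ) (w : Fin (k + 1) → n), (∀ t : Fin k, 0 < A (w t.castSucc) (w t.succ)) →
      0 < (A ^ k) (w 0) (w (Fin.last k)) := by
  intro k
  induction k with
  | zero =>
    intro w _
    have h0 : Fin.last 0 = 0 := rfl
    rw [pow_zero, h0, Matrix.one_apply_eq]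
    norm_num
  | succ k ih =>
    intro w hchain
    rw [pow_succ, Matrix.mul_apply]
    set mid := w (Fin.last k).castSucc with hmid
    have h1 : 0 < (A ^ k) (w 0) mid := by
      have := ih (fun t => w t.castSucc) (fun t => by
        have h := hchain t.castSucc
        rwa [Fin.succ_castSucc] at h)
      simpa using this
    have h2 : 0 < A mid (w (Fin.last (k + 1))) := by
      have h := hchain (Fin.last k)
      rwa [Fin.succ_last] at h
    have hle : (A ^ k) (w 0) mid * A mid (w (Fin.last (k + 1))) ≤
        ∑ l, (A ^ k) (w 0) l * A l (w (Fin.last (k + 1))) :=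
      Finset.single_le_sum (f := fun l => (A ^ k) (w 0) l * A l (w (Fin.last (k + 1))))
        (fun l _ => mul_nonneg (myPow_entry_nonneg A hA k _ _) (hA _ _))
        (Finset.mem_univ mid)
    exact lt_of_lt_of_le (mul_pos h1 h2) hle

lemma primitive_of_band' (N : ℕ) (m : ℕ)
    (A : Matrix (Fin (m + 1) → Fin N × Fin N) (Fin (m + 1) → Fin N × Fin N) ℝ)
    (hpos : ∀ i j, (∀ k : Fin m, i k.succ = j k.castSucc) → 0 < A i j)
    (hnn : ∀ i j, 0 ≤ A i j) : MatPrimitive A := by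
  refine ⟨m + 1, Nat.succ_pos m, fun i j => ?_⟩
  set g : ℕ → Fin N × Fin N := fun d =>
    if h : d ≤ m then i ⟨d, by omega⟩
    else if h2 : d ≤ 2 * m + 1 then j ⟨d - (m + 1), by omega⟩
    else j ⟨0, Nat.succ_pos m⟩ with hg
  set w : Fin (m + 2) → (Fin (m + 1) → Fin N × Fin N) := fun t p => g (p.val + t.val) with hw
  have hw0 : w 0 = i := by
    funext p
    have hp : p.val ≤ m := Nat.lt_succ_iff.mp p.isLt
    have : p.val + (0 : Fin (m + 2)).val = p.val := by simp
    simp only [hw, hg, this]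
    rw [dif_pos hp]
  have hwlast : w (Fin.last (m + 1)) = j := by
    funext p
    have hp : p.val ≤ m := Nat.lt_succ_iff.mp p.isLt
    have hv : p.val + (Fin.last (m + 1)).val = p.val + (m + 1) := by simp
    simp only [hw, hg, hv]
    rw [dif_neg (by omega), dif_pos (by omega)]
    exact congrArg j (Fin.ext (by simp))
  have hchain : ∀ t : Fin (m + 1), 0 < A (w t.castSucc) (w t.succ) := by
    intro t
    apply hpos
    intro k
    show g (k.succ.val + t.castSucc.val) = g (k.castSucc.val + t.succ.val)
    exact congrArg g (by simp [Fin.val_succ, Fin.coe_castSucc]; omega)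
  have := myPow_entry_pos_of_chain A hnn (m + 1) w hchain
  rwa [hw0, hwlast] at this

end AuxScaling

/-- if S is not identically zero on any subrectangle of D then every upper
vertical scaling matrix is primitive; if moreover S has constant sign, so is every lower one. -/
theorem scaling_matrices_primitive (x0 y0 len : ℝ) (hlen : 0 < len) (N : ℕ) (hN : 2 ≤ N)
    (S : ℝ × ℝ → ℝ) (hS : ContinuousOn S (sqD x0 y0 len))
    (hS1 : ∀ t ∈ sqD x0 y0 len, |S t| < 1)
    (hNZ : ∀ a b c d : ℝ, x0 ≤ a → a < b → b ≤ x0 + len → y0 ≤ c → c < d → d ≤ y0 + len →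
      ∃ t ∈ Set.Icc a b ×ˢ Set.Icc c d, S t ≠ 0) :
    (∀ m : ℕ, MatPrimitive (upMat x0 y0 len N S m)) ∧
    (((∀ t ∈ sqD x0 y0 len, 0 < S t) ∨ (∀ t ∈ sqD x0 y0 len, S t < 0)) →
      ∀ m : ℕ, MatPrimitive (lowMat x0 y0 len N S m)) := by
  have hN0 : 0 < N := by omega
  constructor
  · intro m
    apply primitive_of_band' N m
    · intro i j hcompat
      obtain ⟨a, c, s, hs, ha, hb, hc, hd, hE⟩ :=
        cell_struct x0 y0 len hlen N hN0 (List.ofFn i ++ [j (Fin.last m)])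
      have hpos := supAbs_pos_aux x0 y0 len S hS1 hNZ _ a c s hs ha hb hc hd hE
      unfold upMat
      rw [if_pos hcompat]
      exact hpos
    · intro i j
      unfold upMat
      split
      · obtain ⟨a, c, s, hs, ha, hb, hc, hd, hE⟩ :=
          cell_struct x0 y0 len hlen N hN0 (List.ofFn i ++ [j (Fin.last m)])
        exact (supAbs_pos_aux x0 y0 len S hS1 hNZ _ a c s hs ha hb hc hd hE).le
      · exact le_refl 0
  · intro hsgn m
    have hsign : ∀ t ∈ sqD x0 y0 len, S t ≠ 0 := by
      rcases hsgn with h | h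
      · exact fun t ht => ne_of_gt (h t ht)
      · exact fun t ht => ne_of_lt (h t ht)
    apply primitive_of_band' N m
    · intro i j hcompat
      obtain ⟨a, c, s, hs, ha, hb, hc, hd, hE⟩ :=
        cell_struct x0 y0 len hlen N hN0 (List.ofFn i ++ [j (Fin.last m)])
      have hpos := infAbs_pos_aux x0 y0 len S hS hsign _ a c s hs ha hb hc hd hE
      unfold lowMat
      rw [if_pos hcompat]
      exact hpos
    · intro i j
      unfold lowMat
      split
      · obtain ⟨a, c, s, hs, ha, hb, hc, hd, hE⟩ :=
          cell_struct x0 y0 len hlen N hN0 (List.ofFn i ++ [j (Fin.last m)])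
        exact (infAbs_pos_aux x0 y0 len S hS hsign _ a c s hs ha hb hc hd hE).le
      · exact le_refl 0
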